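/- For real p, q ≥ 0, Re(c) > Re(b) > 0, and all complex z, the (p,q)-confluent hypergeometric function satisfies the integral representation Φ_{p,q}(b;c;z) = (1/B(b,c−b)) ∫₀¹ t^{b−1} (1−t)^{c−b−1} exp(zt − p/t − q/(1−t)) dt. -/

import Mathlib

open MeasureTheory

/-- The (p,q)-extended beta function. -/
noncomputable def extBeta (p q x y : ℂ) : ℂ :=
  ∫ t in (0:ℝ)..1, (t:ℂ) ^ (x - 1) * ((1:ℂ) - t) ^ (y - 1) *
    Complex.exp (-p / t - q / (1 - t))

/-- The (p,q)-confluent hypergeometric function, defined by its series. -/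
noncomputable def Phi (p q b c z : ℂ) : ℂ :=
  ∑' n : ℕ, extBeta p q (b + n) (c - b) / Complex.betaIntegral b (c - b) * z ^ n / n.factorial

theorem Phi_integral_rep (p q : ℝ) (hp : 0 ≤ p) (hq : 0 ≤ q) (b c : ℂ)
    (hb : 0 < b.re) (hcb : b.re < c.re) (z : ℂ) :
    Phi p q b c z = (Complex.betaIntegral b (c - b))⁻¹ *
      ∫ t in (0:ℝ)..1, (t:ℂ) ^ (b - 1) * ((1:ℂ) - t) ^ (c - b - 1) *
        Complex.exp (z * t - p / t - q / (1 - t)) := by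
  have hcb' : 0 < (c - b).re := by rw [Complex.sub_re]; linarith
  set A : ℝ → ℂ := fun t => (t:ℂ) ^ (b - 1) * ((1:ℂ) - t) ^ (c - b - 1) with hA
  set E : ℝ → ℂ := fun t => Complex.exp (-(p:ℂ) / t - q / (1 - t)) with hE
  set F : ℕ → ℝ → ℂ := fun n t => A t * E t * ((z * t) ^ n / n.factorial) with hF
  -- integrability of A on Ioo 0 1
  have hAint : IntegrableOn A (Set.Ioo 0 1) volume :=
    (Complex.betaIntegral_convergent hb hcb').1.mono_set Set.Ioo_subset_Ioc_self
  -- continuity of E on Ioo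
  have hEcont : ContinuousOn E (Set.Ioo (0:ℝ) 1) := by
    apply Complex.continuous_exp.comp_continuousOn
    apply ContinuousOn.sub
    · apply ContinuousOn.div continuousOn_const Complex.continuous_ofReal.continuousOn
      intro t ht
      exact_mod_cast ne_of_gt ht.1
    · apply ContinuousOn.div continuousOn_const
      · exact (continuous_const.sub Complex.continuous_ofReal).continuousOn
      · intro t ht
        have : (1:ℝ) - t ≠ 0 := by nlinarith [ht.2]
        simpa using (by exact_mod_cast this : ((1:ℝ) - t : ℂ) ≠ 0)
  -- norm bound on E
  have hEnorm : ∀ t ∈ Set.Ioo (0:ℝ) 1, ‖E t‖ ≤ 1 := by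
    intro t ht
    have hcast : (-(p:ℂ) / t - q / (1 - t)) = ((-p / t - q / (1 - t) : ℝ) : ℂ) := by
      push_cast; ring
    rw [hE]
    simp only [hcast, Complex.norm_exp, Complex.ofReal_re]
    rw [Real.exp_le_one_iff]
    have h1 : 0 ≤ p / t := div_nonneg hp ht.1.le
    have h2 : 0 ≤ q / (1 - t) := div_nonneg hq (by nlinarith [ht.2])
    have h3 : -p / t - q / (1 - t) = -(p / t) - q / (1 - t) := by ring
    rw [h3]; linarith
  -- norm bound on F n
  have hFbound : ∀ n : ℕ, ∀ t ∈ Set.Ioo (0:ℝ) 1,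
      ‖F n t‖ ≤ ‖A t‖ * (‖z‖ ^ n / n.factorial) := by
    intro n t ht
    have h1 : ‖E t‖ ≤ 1 := hEnorm t ht
    have hzt : ‖z * (t:ℂ)‖ ≤ ‖z‖ := by
      rw [norm_mul, Complex.norm_real, Real.norm_of_nonneg ht.1.le]
      nlinarith [norm_nonneg z, ht.2]
    have h2 : ‖z * (t:ℂ)‖ ^ n ≤ ‖z‖ ^ n := pow_le_pow_left₀ (norm_nonneg _) hzt n
    have hfac : (0:ℝ) < n.factorial := by positivity
    calc ‖F n t‖ = ‖A t‖ * ‖E t‖ * (‖z * (t:ℂ)‖ ^ n / n.factorial) := by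
          rw [hF]; simp [norm_mul, norm_div, norm_pow, Complex.norm_natCast]
      _ ≤ ‖A t‖ * 1 * (‖z‖ ^ n / n.factorial) := by
          gcongr
      _ = ‖A t‖ * (‖z‖ ^ n / n.factorial) := by ring
  -- integrability of F n
  have hFint : ∀ n : ℕ, IntegrableOn (F n) (Set.Ioo 0 1) volume := by
    intro n
    have hmeas : AEStronglyMeasurable (F n) (volume.restrict (Set.Ioo (0:ℝ) 1)) := by
      apply (hAint.aestronglyMeasurable.mul
        (hEcont.aestronglyMeasurable measurableSet_Ioo)).mul
      exact (Continuous.aestronglyMeasurable (by continuity))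
    apply Integrable.mono' ((hAint.norm).mul_const (‖z‖ ^ n / n.factorial)) hmeas
    filter_upwards [ae_restrict_mem measurableSet_Ioo] with t ht
    simpa using hFbound n t ht
  -- summability of the integrals of norms
  have hFsum : Summable fun n : ℕ => ∫ t in Set.Ioo (0:ℝ) 1, ‖F n t‖ := by
    have hle : ∀ n : ℕ, (∫ t in Set.Ioo (0:ℝ) 1, ‖F n t‖)
        ≤ (∫ t in Set.Ioo (0:ℝ) 1, ‖A t‖) * (‖z‖ ^ n / n.factorial) := by
      intro n
      calc (∫ t in Set.Ioo (0:ℝ) 1, ‖F n t‖)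
          ≤ ∫ t in Set.Ioo (0:ℝ) 1, ‖A t‖ * (‖z‖ ^ n / n.factorial) := by
            apply setIntegral_mono_on (hFint n).norm
              ((hAint.norm).mul_const _) measurableSet_Ioo
            exact fun t ht => hFbound n t ht
        _ = (∫ t in Set.Ioo (0:ℝ) 1, ‖A t‖) * (‖z‖ ^ n / n.factorial) :=
            integral_mul_const _ _
    exact Summable.of_nonneg_of_le (fun n => integral_nonneg fun t => norm_nonneg _) hle
      ((Real.summable_pow_div_factorial ‖z‖).mul_left _)
  -- each term of the series as an integral
  have hterm : ∀ n : ℕ, extBeta p q (b + n) (c - b) * z ^ n / n.factorial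
      = ∫ t in Set.Ioo (0:ℝ) 1, F n t := by
    intro n
    rw [extBeta, intervalIntegral.integral_of_le zero_le_one,
      integral_Ioc_eq_integral_Ioo]
    have hcongr : ∀ t ∈ Set.Ioo (0:ℝ) 1, F n t
        = ((t:ℂ) ^ (b + n - 1) * ((1:ℂ) - t) ^ (c - b - 1) *
            Complex.exp (-(p:ℂ) / t - q / (1 - t))) * (z ^ n / n.factorial) := by
      intro t ht
      have ht0 : (t:ℂ) ≠ 0 := by exact_mod_cast ne_of_gt ht.1
      have hpow : (t:ℂ) ^ (b + n - 1) = (t:ℂ) ^ (b - 1) * (t:ℂ) ^ (n:ℕ) := by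
        rw [← Complex.cpow_natCast, ← Complex.cpow_add _ _ ht0]
        ring_nf
      simp only [hF, hA, hE, hpow, mul_pow]
      ring
    rw [setIntegral_congr_fun measurableSet_Ioo hcongr, integral_mul_const]
    ring
  -- pointwise sum of the series
  have htsum : ∀ t ∈ Set.Ioo (0:ℝ) 1, (∑' n : ℕ, F n t)
      = (t:ℂ) ^ (b - 1) * ((1:ℂ) - t) ^ (c - b - 1) *
        Complex.exp (z * t - p / t - q / (1 - t)) := by
    intro t ht
    have hexp : (∑' n : ℕ, ((z * t) ^ n / (n.factorial : ℂ))) = Complex.exp (z * t) := by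
      rw [Complex.exp_eq_exp_ℂ, NormedSpace.exp_eq_tsum_div]
    calc (∑' n : ℕ, F n t) = A t * E t * ∑' n : ℕ, ((z * t) ^ n / (n.factorial : ℂ)) := by
          rw [← tsum_mul_left]
      _ = (t:ℂ) ^ (b - 1) * ((1:ℂ) - t) ^ (c - b - 1) *
          Complex.exp (z * t - p / t - q / (1 - t)) := by
          rw [hexp]
          simp only [hA, hE]
          rw [mul_assoc, mul_comm (Complex.exp _) (Complex.exp _), ← Complex.exp_add]
          congr 2
          ring
  -- assembly
  have hstep : ∀ n : ℕ, extBeta p q (b + n) (c - b) / Complex.betaIntegral b (c - b)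
      * z ^ n / n.factorial = (Complex.betaIntegral b (c - b))⁻¹ *
      (extBeta p q (b + n) (c - b) * z ^ n / n.factorial) := by
    intro n; rw [div_eq_mul_inv]; ring
  rw [Phi, tsum_congr hstep, tsum_mul_left]
  congr 1
  calc (∑' n : ℕ, extBeta p q (b + n) (c - b) * z ^ n / n.factorial)
      = ∑' n : ℕ, ∫ t in Set.Ioo (0:ℝ) 1, F n t := tsum_congr hterm
    _ = ∫ t in Set.Ioo (0:ℝ) 1, ∑' n : ℕ, F n t :=
        integral_tsum_of_summable_integral_norm hFint hFsum
    _ = ∫ t in Set.Ioo (0:ℝ) 1, (t:ℂ) ^ (b - 1) * ((1:ℂ) - t) ^ (c - b - 1) *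
          Complex.exp (z * t - p / t - q / (1 - t)) :=
        setIntegral_congr_fun measurableSet_Ioo htsum
    _ = ∫ t in (0:ℝ)..1, (t:ℂ) ^ (b - 1) * ((1:ℂ) - t) ^ (c - b - 1) *
          Complex.exp (z * t - p / t - q / (1 - t)) := by
        rw [intervalIntegral.integral_of_le zero_le_one, integral_Ioc_eq_integral_Ioo]
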